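/- arXiv:2006.01474 — 3 statements merged into one kernel-verified Lean document; each statement's English description precedes it below -/
import Mathlib

section
/- Let (W1, W2) be a centered bivariate Gaussian random vector with Var(W1) = Var(W2) = σ² and Cov(W1, W2) ≥ 0. Then for any l1, l2 ≤ 0 and u1, u2 ≥ 0, P((l1 - u2)/√2 ≤ W1 - W2 ≤ (u1 - l2)/√2) ≥ (1/2)·P(l1 ≤ W1 ≤ u1) + (1/2)·P(l2 ≤ W2 ≤ u2). -/
open MeasureTheory ProbabilityTheory

open Set
open scoped NNReal ENNReal

lemma pdf_anti {v : ℝ≥0} {y z : ℝ} (hy : 0 ≤ y) (hz : y ≤ z) :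
    gaussianPDFReal 0 v z ≤ gaussianPDFReal 0 v y := by
  unfold gaussianPDFReal
  simp only [sub_zero]
  apply mul_le_mul_of_nonneg_left _ (by positivity)
  apply Real.exp_le_exp.mpr
  rcases eq_or_ne (v : ℝ) 0 with h | h
  · rw [h]; simp
  · have hv : (0:ℝ) < 2 * v := by positivity
    have : -z ^ 2 ≤ -y ^ 2 := by nlinarith
    gcongr

lemma shiftIoc {v : ℝ≥0} {x h d : ℝ} (hx : 0 ≤ x) (hh : 0 ≤ h) (hd : 0 ≤ d) :
    gaussianReal 0 v (Ioc (x + d) (x + d + h)) ≤ gaussianReal 0 v (Ioc x (x + h)) := by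
  rcases eq_or_ne v 0 with hv | hv
  · rw [hv, gaussianReal_zero_var, Measure.dirac_apply' _ measurableSet_Ioc]
    have : (0:ℝ) ∉ Ioc (x + d) (x + d + h) := by
      intro h0; exact absurd h0.1 (by simp; linarith)
    simp [this]
  · rw [gaussianReal_apply_eq_integral _ hv, gaussianReal_apply_eq_integral _ hv]
    apply ENNReal.ofReal_le_ofReal
    rw [← intervalIntegral.integral_of_le (by linarith), ← intervalIntegral.integral_of_le (by linarith)]
    have key : ∫ y in (x+d)..(x+d+h), gaussianPDFReal 0 v y
        = ∫ y in x..(x+h), gaussianPDFReal 0 v (y + d) := by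
      rw [intervalIntegral.integral_comp_add_right]
      congr 1
      ring
    rw [key]
    apply intervalIntegral.integral_mono_on (by linarith)
    · exact ((integrable_gaussianPDFReal 0 v).comp_add_right d).intervalIntegrable
    · exact (integrable_gaussianPDFReal 0 v).intervalIntegrable
    · intro y hy
      exact pdf_anti (le_trans hx hy.1) (by linarith)

lemma g_concave {v : ℝ≥0} {p q : ℝ} (hp : 0 ≤ p) (hq : 0 ≤ q) :
    gaussianReal 0 v (Ioc 0 p) + gaussianReal 0 v (Ioc 0 q)
      ≤ 2 * gaussianReal 0 v (Ioc 0 ((p + q) / 2)) := by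
  wlog hpq : p ≤ q generalizing p q
  · rw [add_comm (gaussianReal 0 v (Ioc 0 p)), add_comm p]
    exact this hq hp (by linarith)
  set m := (p + q) / 2 with hm
  have hpm : p ≤ m := by rw [hm]; linarith
  have hmq : m ≤ q := by rw [hm]; linarith
  have hsplit : gaussianReal 0 v (Ioc 0 q) = gaussianReal 0 v (Ioc 0 m) + gaussianReal 0 v (Ioc m q) := by
    rw [← measure_union (Set.Ioc_disjoint_Ioc_of_le le_rfl) measurableSet_Ioc,
      Set.Ioc_union_Ioc_eq_Ioc (le_trans hp hpm) hmq]
  have hshift : gaussianReal 0 v (Ioc m q) ≤ gaussianReal 0 v (Ioc p m) := by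
    have := shiftIoc (v := v) (x := p) (h := (q - p) / 2) (d := (q - p) / 2) hp (by linarith) (by linarith)
    have e1 : p + (q - p) / 2 = m := by rw [hm]; ring
    have e2 : m + (q - p) / 2 = q := by rw [hm]; ring
    rwa [e1, e2] at this
  have hsub : gaussianReal 0 v (Ioc 0 p) + gaussianReal 0 v (Ioc p m) = gaussianReal 0 v (Ioc 0 m) := by
    rw [← measure_union (Set.Ioc_disjoint_Ioc_of_le le_rfl) measurableSet_Ioc,
      Set.Ioc_union_Ioc_eq_Ioc hp hpm]
  calc gaussianReal 0 v (Ioc 0 p) + gaussianReal 0 v (Ioc 0 q)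
      = gaussianReal 0 v (Ioc 0 p) + gaussianReal 0 v (Ioc m q) + gaussianReal 0 v (Ioc 0 m) := by
        rw [hsplit]; ring
    _ ≤ gaussianReal 0 v (Ioc 0 p) + gaussianReal 0 v (Ioc p m) + gaussianReal 0 v (Ioc 0 m) := by
        gcongr
    _ = 2 * gaussianReal 0 v (Ioc 0 m) := by rw [hsub]; ring

lemma gauss_neg_set {v : ℝ≥0} {l u : ℝ} :
    gaussianReal 0 v (Icc l u) = gaussianReal 0 v (Icc (-u) (-l)) := by
  have hmap : (gaussianReal 0 v).map (fun x => (-1 : ℝ) * x) = gaussianReal 0 v := by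
    rw [gaussianReal_map_const_mul]
    congr 1
    · ring
    · ext; push_cast; ring
  conv_rhs => rw [← hmap]
  rw [Measure.map_apply (by fun_prop) measurableSet_Icc]
  congr 1
  ext x
  simp only [Set.mem_preimage, Set.mem_Icc]
  constructor <;> intro hx <;> constructor <;> linarith [hx.1, hx.2]

lemma icc_eq_g {v : ℝ≥0} (hv : v ≠ 0) {l u : ℝ} (hl : l ≤ 0) (hu : 0 ≤ u) :
    gaussianReal 0 v (Icc l u) = gaussianReal 0 v (Ioc 0 (-l)) + gaussianReal 0 v (Ioc 0 u) := by
  have h0 : gaussianReal 0 v {(0:ℝ)} = 0 :=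
    gaussianReal_absolutelyContinuous 0 hv Real.volume_singleton
  have hIccIoc : ∀ t : ℝ, gaussianReal 0 v (Icc 0 t) = gaussianReal 0 v (Ioc 0 t) := by
    intro t
    refine le_antisymm ?_ (measure_mono Set.Ioc_subset_Icc_self)
    calc gaussianReal 0 v (Icc 0 t) ≤ gaussianReal 0 v (Ioc 0 t ∪ {0}) := by
          apply measure_mono
          intro x hx
          rcases eq_or_lt_of_le hx.1 with h | h
          · exact Or.inr (by simp [← h])
          · exact Or.inl ⟨h, hx.2⟩
      _ ≤ gaussianReal 0 v (Ioc 0 t) + gaussianReal 0 v {0} := measure_union_le _ _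
      _ = gaussianReal 0 v (Ioc 0 t) := by rw [h0, add_zero]
  have hdisj : Disjoint (Icc l 0) (Ioc 0 u) := by
    rw [Set.disjoint_left]
    intro x hx1 hx2
    exact absurd hx1.2 (not_le.mpr hx2.1)
  rw [← Set.Icc_union_Ioc_eq_Icc hl hu, measure_union hdisj measurableSet_Ioc]
  congr 1
  rw [gauss_neg_set, neg_zero, hIccIoc]

lemma midpoint_ineq {v : ℝ≥0} {x₁ y₁ x₂ y₂ : ℝ} (hx₁ : x₁ ≤ 0) (hy₁ : 0 ≤ y₁)
    (hx₂ : x₂ ≤ 0) (hy₂ : 0 ≤ y₂) :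
    gaussianReal 0 v (Icc x₁ y₁) + gaussianReal 0 v (Icc x₂ y₂)
      ≤ 2 * gaussianReal 0 v (Icc ((x₁ + x₂) / 2) ((y₁ + y₂) / 2)) := by
  rcases eq_or_ne v 0 with hv | hv
  · have hmem : ∀ {a b : ℝ}, a ≤ 0 → 0 ≤ b → gaussianReal 0 0 (Icc a b) = 1 := by
      intro a b ha hb
      rw [gaussianReal_zero_var, Measure.dirac_apply' _ measurableSet_Icc]
      simp [Set.mem_Icc, ha, hb]
    rw [hv, hmem hx₁ hy₁, hmem hx₂ hy₂, hmem (by linarith) (by linarith)]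
    norm_num
  · rw [icc_eq_g hv hx₁ hy₁, icc_eq_g hv hx₂ hy₂,
      icc_eq_g hv (by linarith) (by linarith)]
    have e : -((x₁ + x₂) / 2) = (-x₁ + -x₂) / 2 := by ring
    rw [e, mul_add]
    calc gaussianReal 0 v (Ioc 0 (-x₁)) + gaussianReal 0 v (Ioc 0 y₁)
          + (gaussianReal 0 v (Ioc 0 (-x₂)) + gaussianReal 0 v (Ioc 0 y₂))
        = (gaussianReal 0 v (Ioc 0 (-x₁)) + gaussianReal 0 v (Ioc 0 (-x₂)))
          + (gaussianReal 0 v (Ioc 0 y₁) + gaussianReal 0 v (Ioc 0 y₂)) := by ring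
      _ ≤ 2 * gaussianReal 0 v (Ioc 0 ((-x₁ + -x₂) / 2)) + 2 * gaussianReal 0 v (Ioc 0 ((y₁ + y₂) / 2)) := by
          gcongr <;> [exact g_concave (by linarith) (by linarith); exact g_concave hy₁ hy₂]

lemma var_mono {v w : ℝ≥0} (hvw : v ≤ w) {a b : ℝ} (ha : a ≤ 0) (hb : 0 ≤ b) :
    gaussianReal 0 w (Icc a b) ≤ gaussianReal 0 v (Icc a b) := by
  rcases eq_or_ne v 0 with hv | hv
  · have : gaussianReal 0 v (Icc a b) = 1 := by
      rw [hv, gaussianReal_zero_var, Measure.dirac_apply' _ measurableSet_Icc]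
      simp [Set.mem_Icc, ha, hb]
    rw [this]
    exact prob_le_one
  · set k : ℝ := Real.sqrt (w / v) with hk
    have hv0 : (0:ℝ) < v := by positivity
    have hk1 : 1 ≤ k := by
      rw [hk]
      rw [show (1:ℝ) = Real.sqrt 1 by simp]
      apply Real.sqrt_le_sqrt
      rw [le_div_iff₀ hv0]
      simpa using hvw
    have hk0 : (0:ℝ) < k := by linarith
    have hmap : (gaussianReal 0 v).map (fun x => k * x) = gaussianReal 0 w := by
      rw [gaussianReal_map_const_mul]
      congr 1
      · ring
      · ext
        push_cast
        rw [Real.sq_sqrt (by positivity)]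
        field_simp
    rw [← hmap, Measure.map_apply (by fun_prop) measurableSet_Icc]
    apply measure_mono
    intro x hx
    simp only [Set.mem_preimage, Set.mem_Icc] at hx ⊢
    rcases le_or_gt 0 x with hx0 | hx0
    · constructor
      · linarith
      · nlinarith [hx.2]
    · constructor
      · nlinarith [hx.1]
      · linarith

/-- Lemma A1: for a centered bivariate Gaussian vector `(W₁, W₂)` with equal variances `σ2`
and non-negative covariance `c` (joint Gaussianity encoded via all linear combinations
being Gaussian), and any `l₁, l₂ ≤ 0`, `u₁, u₂ ≥ 0`,
`P((l₁-u₂)/√2 ≤ W₁-W₂ ≤ (u₁-l₂)/√2) ≥ ½ P(l₁ ≤ W₁ ≤ u₁) + ½ P(l₂ ≤ W₂ ≤ u₂)`. -/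
theorem stmt0 {Ω : Type*} [MeasureSpace Ω] [IsProbabilityMeasure (ℙ : Measure Ω)]
    (W₁ W₂ : Ω → ℝ) (hW₁ : Measurable W₁) (hW₂ : Measurable W₂)
    (σ2 c : ℝ) (hσ2 : 0 ≤ σ2) (hc : 0 ≤ c)
    (hgauss : ∀ a b : ℝ,
      Measure.map (fun ω => a * W₁ ω + b * W₂ ω) ℙ
        = gaussianReal 0 (((a ^ 2 + b ^ 2) * σ2 + 2 * a * b * c).toNNReal))
    (l₁ l₂ u₁ u₂ : ℝ) (hl₁ : l₁ ≤ 0) (hl₂ : l₂ ≤ 0) (hu₁ : 0 ≤ u₁) (hu₂ : 0 ≤ u₂) :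
    ℙ {ω | (l₁ - u₂) / Real.sqrt 2 ≤ W₁ ω - W₂ ω ∧ W₁ ω - W₂ ω ≤ (u₁ - l₂) / Real.sqrt 2}
      ≥ (1 / 2) * ℙ {ω | l₁ ≤ W₁ ω ∧ W₁ ω ≤ u₁}
        + (1 / 2) * ℙ {ω | l₂ ≤ W₂ ω ∧ W₂ ω ≤ u₂} := by
  have hs2pos : (0:ℝ) < Real.sqrt 2 := by positivity
  have hs2 : Real.sqrt 2 * Real.sqrt 2 = 2 := Real.mul_self_sqrt (by norm_num)
  have hdivkey : ∀ t : ℝ, t / Real.sqrt 2 = Real.sqrt 2 * (t / 2) := by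
    intro t
    field_simp
    linear_combination (-t) * hs2
  -- marginals
  have h1 : Measure.map W₁ ℙ = gaussianReal 0 σ2.toNNReal := by
    have := hgauss 1 0
    have e : (fun ω => (1:ℝ) * W₁ ω + 0 * W₂ ω) = W₁ := by funext ω; ring
    rw [e, show ((1:ℝ)^2 + 0^2) * σ2 + 2 * 1 * 0 * c = σ2 by ring] at this
    exact this
  have h2 : Measure.map W₂ ℙ = gaussianReal 0 σ2.toNNReal := by
    have := hgauss 0 1
    have e : (fun ω => (0:ℝ) * W₁ ω + 1 * W₂ ω) = W₂ := by funext ω; ring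
    rw [e, show ((0:ℝ)^2 + 1^2) * σ2 + 2 * 0 * 1 * c = σ2 by ring] at this
    exact this
  have hD : Measure.map (fun ω => W₁ ω - W₂ ω) ℙ
      = gaussianReal 0 (2 * σ2 - 2 * c).toNNReal := by
    have := hgauss 1 (-1)
    have e : (fun ω => (1:ℝ) * W₁ ω + (-1) * W₂ ω) = fun ω => W₁ ω - W₂ ω := by
      funext ω; ring
    rw [e, show ((1:ℝ)^2 + (-1)^2) * σ2 + 2 * 1 * (-1) * c = 2 * σ2 - 2 * c by ring] at this
    exact this
  -- express probabilities as gaussian measures of intervals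
  have P1 : ℙ {ω | l₁ ≤ W₁ ω ∧ W₁ ω ≤ u₁} = gaussianReal 0 σ2.toNNReal (Icc l₁ u₁) := by
    rw [← h1, Measure.map_apply hW₁ measurableSet_Icc]
    rfl
  have P2 : ℙ {ω | l₂ ≤ W₂ ω ∧ W₂ ω ≤ u₂} = gaussianReal 0 σ2.toNNReal (Icc l₂ u₂) := by
    rw [← h2, Measure.map_apply hW₂ measurableSet_Icc]
    rfl
  have PD : ℙ {ω | (l₁ - u₂) / Real.sqrt 2 ≤ W₁ ω - W₂ ω ∧ W₁ ω - W₂ ω ≤ (u₁ - l₂) / Real.sqrt 2}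
      = gaussianReal 0 (2 * σ2 - 2 * c).toNNReal
          (Icc ((l₁ - u₂) / Real.sqrt 2) ((u₁ - l₂) / Real.sqrt 2)) := by
    rw [← hD, Measure.map_apply (by fun_prop) measurableSet_Icc]
    rfl
  -- step C : the big-variance gaussian of the interval equals μ of the halved interval
  have hmap2 : (gaussianReal 0 σ2.toNNReal).map (fun x => Real.sqrt 2 * x)
      = gaussianReal 0 (2 * σ2).toNNReal := by
    rw [gaussianReal_map_const_mul]
    congr 1
    · ring
    · apply NNReal.coe_injective
      push_cast
      rw [Real.sq_sqrt (by norm_num : (0:ℝ) ≤ 2), Real.coe_toNNReal _ hσ2,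
        Real.coe_toNNReal _ (by linarith)]
  have hpre : (fun x => Real.sqrt 2 * x) ⁻¹'
        (Icc ((l₁ - u₂) / Real.sqrt 2) ((u₁ - l₂) / Real.sqrt 2))
      = Icc ((l₁ - u₂) / 2) ((u₁ - l₂) / 2) := by
    rw [hdivkey (l₁ - u₂), hdivkey (u₁ - l₂)]
    ext x
    simp only [Set.mem_preimage, Set.mem_Icc, mul_le_mul_iff_right₀ hs2pos]
  have hC : gaussianReal 0 (2 * σ2).toNNReal
        (Icc ((l₁ - u₂) / Real.sqrt 2) ((u₁ - l₂) / Real.sqrt 2))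
      = gaussianReal 0 σ2.toNNReal (Icc ((l₁ - u₂) / 2) ((u₁ - l₂) / 2)) := by
    rw [← hmap2, Measure.map_apply (by fun_prop) measurableSet_Icc, hpre]
  -- step B : variance monotonicity
  have hB : gaussianReal 0 (2 * σ2).toNNReal
        (Icc ((l₁ - u₂) / Real.sqrt 2) ((u₁ - l₂) / Real.sqrt 2))
      ≤ gaussianReal 0 (2 * σ2 - 2 * c).toNNReal
          (Icc ((l₁ - u₂) / Real.sqrt 2) ((u₁ - l₂) / Real.sqrt 2)) := by
    apply var_mono
    · exact Real.toNNReal_le_toNNReal (by linarith)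
    · apply div_nonpos_of_nonpos_of_nonneg (by linarith) hs2pos.le
    · apply div_nonneg (by linarith) hs2pos.le
  -- step D : midpoint inequality
  have hD2 : gaussianReal 0 σ2.toNNReal (Icc l₁ u₁) + gaussianReal 0 σ2.toNNReal (Icc l₂ u₂)
      ≤ 2 * gaussianReal 0 σ2.toNNReal (Icc ((l₁ - u₂) / 2) ((u₁ - l₂) / 2)) := by
    have := midpoint_ineq (v := σ2.toNNReal) (x₁ := l₁) (y₁ := u₁) (x₂ := -u₂) (y₂ := -l₂)
      hl₁ hu₁ (by linarith) (by linarith)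
    rw [← gauss_neg_set (l := l₂) (u := u₂),
      show (l₁ + -u₂) / 2 = (l₁ - u₂) / 2 by ring,
      show (u₁ + -l₂) / 2 = (u₁ - l₂) / 2 by ring] at this
    exact this
  -- combine
  rw [ge_iff_le, P1, P2, PD]
  calc (1/2 : ℝ≥0∞) * gaussianReal 0 σ2.toNNReal (Icc l₁ u₁)
        + (1/2) * gaussianReal 0 σ2.toNNReal (Icc l₂ u₂)
      = (1/2) * (gaussianReal 0 σ2.toNNReal (Icc l₁ u₁)
          + gaussianReal 0 σ2.toNNReal (Icc l₂ u₂)) := by rw [mul_add]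
    _ ≤ (1/2) * (2 * gaussianReal 0 σ2.toNNReal (Icc ((l₁ - u₂) / 2) ((u₁ - l₂) / 2))) :=
        mul_le_mul_right hD2 _
    _ = gaussianReal 0 σ2.toNNReal (Icc ((l₁ - u₂) / 2) ((u₁ - l₂) / 2)) := by
        rw [← mul_assoc, one_div, ENNReal.inv_mul_cancel (by norm_num) (by norm_num), one_mul]
    _ = gaussianReal 0 (2 * σ2).toNNReal
          (Icc ((l₁ - u₂) / Real.sqrt 2) ((u₁ - l₂) / Real.sqrt 2)) := hC.symm
    _ ≤ _ := hB
end

section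
/- Conformal coverage (split version): Let scores S1, ..., S_{k+1} be exchangeable real random variables (the score of the test point being S_{k+1}), and let R be the rank of S_{k+1} among them (with a data-independent tie-break). Then for α ∈ (0,1): 1 - α ≤ P(R ≤ ⌈(1-α)(k+1)⌉) ≤ 1 - α + 1/(k+1). -/
open MeasureTheory ProbabilityTheory
open scoped ENNReal

noncomputable def gfun {n : ℕ} (x : Fin n → ℝ) (i : Fin n) : ℕ :=
  (Finset.univ.filter (fun l => x l ≤ x i)).card

lemma gfun_measurable {n : ℕ} (i : Fin n) : Measurable fun x : Fin n → ℝ => gfun x i := by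
  have h : (fun x : Fin n → ℝ => gfun x i)
      = fun x => ∑ l : Fin n, if x l ≤ x i then 1 else 0 := by
    funext x; rw [gfun, Finset.card_filter]
  rw [h]
  exact Finset.measurable_sum _ fun l _ =>
    Measurable.ite (measurableSet_le (measurable_pi_apply l) (measurable_pi_apply i))
      measurable_const measurable_const

lemma gfun_comp_perm {n : ℕ} (x : Fin n → ℝ) (σ : Equiv.Perm (Fin n)) (i : Fin n) :
    gfun (fun l => x (σ l)) i = gfun x (σ i) := by
  unfold gfun
  apply Finset.card_bij' (fun l _ => σ l) (fun l _ => σ.symm l) <;> simp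

lemma one_le_gfun {n : ℕ} (x : Fin n → ℝ) (i : Fin n) : 1 ≤ gfun x i :=
  Finset.card_pos.2 ⟨i, by simp⟩

lemma gfun_le {n : ℕ} (x : Fin n → ℝ) (i : Fin n) : gfun x i ≤ n := by
  simpa [gfun] using (Finset.card_filter_le Finset.univ (fun l => x l ≤ x i))

lemma gfun_lt_of_lt {n : ℕ} (x : Fin n → ℝ) {i j : Fin n} (h : x i < x j) :
    gfun x i < gfun x j := by
  apply Finset.card_lt_card
  constructor
  · intro l hl
    simp only [Finset.mem_filter, Finset.mem_univ, true_and] at hl ⊢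
    exact hl.trans h.le
  · intro hsub
    have := hsub (by simp : j ∈ Finset.univ.filter (fun l => x l ≤ x j))
    simp only [Finset.mem_filter, Finset.mem_univ, true_and] at this
    exact absurd this (not_le.2 h)

lemma gfun_injective {n : ℕ} {x : Fin n → ℝ} (hx : Function.Injective x) :
    Function.Injective (gfun x) := by
  intro i j hij
  rcases lt_trichotomy (x i) (x j) with h | h | h
  · exact absurd hij (gfun_lt_of_lt x h).ne
  · exact hx h
  · exact absurd hij.symm (gfun_lt_of_lt x h).ne

lemma gfun_surj {n : ℕ} {x : Fin n → ℝ} (hx : Function.Injective x) {j : ℕ}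
    (h1 : 1 ≤ j) (h2 : j ≤ n) : ∃ i, gfun x i = j := by
  have hn : 0 < n := lt_of_lt_of_le h1 h2
  let e : Fin n → Fin n := fun i => ⟨gfun x i - 1, by
    have := gfun_le x i; have := one_le_gfun x i; omega⟩
  have he : Function.Injective e := by
    intro a b hab
    apply gfun_injective hx
    have := one_le_gfun x a; have := one_le_gfun x b
    have : (gfun x a - 1 : ℕ) = gfun x b - 1 := congrArg Fin.val hab
    omega
  obtain ⟨i, hi⟩ := (Finite.injective_iff_surjective.1 he) ⟨j - 1, by omega⟩
  refine ⟨i, ?_⟩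
  have : (gfun x i - 1 : ℕ) = j - 1 := congrArg Fin.val hi
  have := one_le_gfun x i
  omega

/-- Split-conformal coverage: if the scores `S 0, …, S k` (the last being the score of the
test point) are exchangeable with a.s. no ties, and `R` is the rank of the last score among
them (data-independent index tie-break), then for `α ∈ (0,1)`,
`1-α ≤ P(R ≤ ⌈(1-α)(k+1)⌉) ≤ 1-α + 1/(k+1)`. -/
theorem stmt11 {Ω : Type*} [MeasureSpace Ω] [IsProbabilityMeasure (ℙ : Measure Ω)]
    (k : ℕ) (S : Fin (k + 1) → Ω → ℝ) (hS : ∀ i, Measurable (S i))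
    (hexch : ∀ σ : Equiv.Perm (Fin (k + 1)),
      Measure.map (fun ω i => S (σ i) ω) ℙ = Measure.map (fun ω i => S i ω) ℙ)
    (hties : ∀ i j : Fin (k + 1), i ≠ j → ℙ {ω | S i ω = S j ω} = 0)
    (R : Ω → ℕ)
    (hR : ∀ ω, R ω =
      Set.ncard {i : Fin (k + 1) |
        S i ω < S (Fin.last k) ω ∨ (S i ω = S (Fin.last k) ω ∧ i ≤ Fin.last k)})
    (α : ℝ) (hα : α ∈ Set.Ioo (0 : ℝ) 1) :
    1 - α ≤ (ℙ {ω | (R ω : ℤ) ≤ ⌈(1 - α) * (k + 1 : ℝ)⌉}).toReal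
      ∧ (ℙ {ω | (R ω : ℤ) ≤ ⌈(1 - α) * (k + 1 : ℝ)⌉}).toReal ≤ 1 - α + 1 / (k + 1 : ℝ) := by
  obtain ⟨hα0, hα1⟩ := hα
  set T : Ω → (Fin (k + 1) → ℝ) := fun ω i => S i ω with hTdef
  have hTmeas : Measurable T := measurable_pi_lambda _ hS
  -- the no-ties event
  set A : Set Ω := {ω | Function.Injective (T ω)} with hAdef
  have hAc : ℙ Aᶜ = 0 := by
    refine measure_mono_null (fun ω hω => ?_)
      (measure_iUnion_null fun i : Fin (k + 1) => measure_iUnion_null fun j : Fin (k + 1) =>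
        (?_ : ℙ {ω | i ≠ j ∧ S i ω = S j ω} = 0))
    · obtain ⟨a, b, hab, hne⟩ := Function.not_injective_iff.1 hω
      exact Set.mem_iUnion.2 ⟨a, Set.mem_iUnion.2 ⟨b, hne, hab⟩⟩
    · by_cases hij : i = j
      · subst hij; simp
      · exact measure_mono_null (fun ω h => h.2) (hties i j hij)
  have hAmeas : MeasurableSet A := by
    have : A = ⋂ (i : Fin (k + 1)) (j : Fin (k + 1)), {ω | S i ω = S j ω → i = j} := by
      ext ω
      simp only [hAdef, Set.mem_setOf_eq, Set.mem_iInter, Function.Injective]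
      exact Iff.rfl
    rw [this]
    refine MeasurableSet.iInter fun i => MeasurableSet.iInter fun j => ?_
    by_cases hij : i = j
    · simp [hij]
    · have : {ω | S i ω = S j ω → i = j} = {ω | S i ω = S j ω}ᶜ := by
        ext ω; simp [hij]
      rw [this]
      exact (measurableSet_eq_fun (hS i) (hS j)).compl
  have hA1 : ℙ A = 1 := (prob_compl_eq_zero_iff hAmeas).1 hAc
  -- events
  set E : ℕ → Fin (k + 1) → Set Ω := fun j i => {ω | gfun (T ω) i = j} with hEdef
  have hEmeas : ∀ j i, MeasurableSet (E j i) := fun j i =>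
    (gfun_measurable i).comp hTmeas (measurableSet_singleton j)
  -- exchangeability: all indices have the same rank distribution
  have hsame : ∀ (j : ℕ) (i : Fin (k + 1)), ℙ (E j i) = ℙ (E j (Fin.last k)) := by
    intro j i
    set σ := Equiv.swap i (Fin.last k) with hσ
    have hmσ : Measurable (fun ω l => S (σ l) ω) := measurable_pi_lambda _ fun l => hS (σ l)
    have hset : MeasurableSet {x : Fin (k + 1) → ℝ | gfun x i = j} :=
      gfun_measurable i (measurableSet_singleton j)
    have h1 : ℙ {ω | gfun (fun l => S (σ l) ω) i = j} = ℙ (E j i) := by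
      calc ℙ {ω | gfun (fun l => S (σ l) ω) i = j}
          = Measure.map (fun ω l => S (σ l) ω) ℙ {x | gfun x i = j} := by
            rw [Measure.map_apply hmσ hset]; rfl
        _ = Measure.map (fun ω l => S l ω) ℙ {x | gfun x i = j} := by rw [hexch σ]
        _ = ℙ (E j i) := by rw [Measure.map_apply hTmeas hset]; rfl
    have h2 : {ω | gfun (fun l => S (σ l) ω) i = j} = E j (Fin.last k) := by
      ext ω
      have := gfun_comp_perm (T ω) σ i
      simp only [hEdef, Set.mem_setOf_eq]
      rw [show (fun l => S (σ l) ω) = (fun l => T ω (σ l)) from rfl, this,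
        hσ, Equiv.swap_apply_left]
    rw [← h1, h2]
  -- uniformity
  have hunif : ∀ j : ℕ, 1 ≤ j → j ≤ k + 1 →
      ℙ (E j (Fin.last k)) = ((k : ℝ≥0∞) + 1)⁻¹ := by
    intro j hj1 hj2
    have hdisj : Pairwise (Function.onFun Disjoint fun i => E j i ∩ A) := by
      intro a b hab
      refine Set.disjoint_left.2 fun ω ⟨ha, hA⟩ ⟨hb, _⟩ => ?_
      exact hab (gfun_injective hA (by rw [ha, hb] : gfun (T ω) a = gfun (T ω) b))
    have hcover : (⋃ i, E j i ∩ A) = A := by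
      ext ω
      constructor
      · rintro ⟨s, ⟨i, rfl⟩, _, hω⟩; exact hω
      · intro hω
        obtain ⟨i, hi⟩ := gfun_surj hω hj1 hj2
        exact Set.mem_iUnion.2 ⟨i, hi, hω⟩
    have hsum : ∑' i : Fin (k + 1), ℙ (E j i ∩ A) = 1 := by
      rw [← measure_iUnion hdisj fun i => (hEmeas j i).inter hAmeas, hcover, hA1]
    have hconst : ∀ i : Fin (k + 1), ℙ (E j i ∩ A) = ℙ (E j (Fin.last k)) := fun i => by
      rw [measure_inter_conull hAc, hsame j i]
    rw [tsum_fintype] at hsum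
    simp only [hconst] at hsum
    rw [Finset.sum_const, Finset.card_univ, Fintype.card_fin, nsmul_eq_mul] at hsum
    have hne : ((k : ℝ≥0∞) + 1) ≠ 0 := by simp
    have hnt : ((k : ℝ≥0∞) + 1) ≠ ⊤ := by simp
    have : ((k + 1 : ℕ) : ℝ≥0∞) = (k : ℝ≥0∞) + 1 := by push_cast; ring
    rw [this] at hsum
    calc ℙ (E j (Fin.last k)) = ((k : ℝ≥0∞) + 1)⁻¹ * (((k : ℝ≥0∞) + 1) * ℙ (E j (Fin.last k))) := by
          rw [← mul_assoc, ENNReal.inv_mul_cancel hne hnt, one_mul]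
      _ = ((k : ℝ≥0∞) + 1)⁻¹ := by rw [hsum, mul_one]
  -- R equals gfun at last index everywhere
  have hRg : ∀ ω, R ω = gfun (T ω) (Fin.last k) := by
    intro ω
    rw [hR ω]
    have hset : {i : Fin (k + 1) |
        S i ω < S (Fin.last k) ω ∨ (S i ω = S (Fin.last k) ω ∧ i ≤ Fin.last k)}
        = ↑(Finset.univ.filter fun l => T ω l ≤ T ω (Fin.last k)) := by
      ext i
      simp only [Set.mem_setOf_eq, Finset.coe_filter, Finset.mem_univ, true_and, hTdef]
      constructor
      · rintro (h | ⟨h, _⟩); exacts [h.le, h.le]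
      · intro h
        rcases lt_or_eq_of_le h with h' | h'
        · exact Or.inl h'
        · exact Or.inr ⟨h', Fin.le_last i⟩
    rw [hset, Set.ncard_coe_finset]
    rfl
  -- the ceiling
  set m : ℤ := ⌈(1 - α) * (k + 1 : ℝ)⌉ with hmdef
  have hkpos : (0 : ℝ) < (k : ℝ) + 1 := by positivity
  have hm1 : 1 ≤ m := by
    have : (0 : ℝ) < (1 - α) * (k + 1 : ℝ) := by
      apply mul_pos (by linarith) (by positivity)
    exact Int.ceil_pos.2 this
  have hm2 : m ≤ (k : ℤ) + 1 := by
    apply Int.ceil_le.2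
    push_cast
    nlinarith
  set mN : ℕ := m.toNat with hmNdef
  have hmN : (mN : ℤ) = m := Int.toNat_of_nonneg (by omega)
  have hmN1 : 1 ≤ mN := by omega
  have hmN2 : mN ≤ k + 1 := by omega
  -- the target event
  have hCeq : {ω | (R ω : ℤ) ≤ m} = ⋃ j ∈ Finset.Icc 1 mN, E j (Fin.last k) := by
    ext ω
    simp only [Set.mem_setOf_eq, Set.mem_iUnion, Finset.mem_Icc, hEdef, hRg ω]
    constructor
    · intro h
      refine ⟨gfun (T ω) (Fin.last k), ⟨one_le_gfun _ _, ?_⟩, rfl⟩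
      omega
    · rintro ⟨j, ⟨hj1, hj2⟩, rfl⟩
      omega
  have hdisj2 : (↑(Finset.Icc 1 mN) : Set ℕ).Pairwise
      (Function.onFun Disjoint fun j => E j (Fin.last k)) := by
    intro a _ b _ hab
    exact Set.disjoint_left.2 fun ω ha hb => hab (by rw [← ha, ← hb])
  have hPC : ℙ {ω | (R ω : ℤ) ≤ m} = (mN : ℝ≥0∞) * ((k : ℝ≥0∞) + 1)⁻¹ := by
    rw [hCeq, measure_biUnion_finset hdisj2 fun j _ => hEmeas j (Fin.last k)]
    have : ∀ j ∈ Finset.Icc 1 mN, ℙ (E j (Fin.last k)) = ((k : ℝ≥0∞) + 1)⁻¹ := by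
      intro j hj
      rw [Finset.mem_Icc] at hj
      exact hunif j hj.1 (hj.2.trans hmN2)
    rw [Finset.sum_congr rfl this, Finset.sum_const, Nat.card_Icc, nsmul_eq_mul]
    have h11 : mN + 1 - 1 = mN := by omega
    rw [h11]
  have htoReal : (ℙ {ω | (R ω : ℤ) ≤ m}).toReal = (mN : ℝ) / ((k : ℝ) + 1) := by
    rw [hPC, ENNReal.toReal_mul, ENNReal.toReal_inv]
    rw [div_eq_mul_inv]
    congr 2 <;> simp [ENNReal.toReal_add]
  rw [htoReal]
  have h2 : (mN : ℝ) = (m : ℝ) := by exact_mod_cast hmN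
  have hlow : (1 - α) * ((k : ℝ) + 1) ≤ (mN : ℝ) := by
    have h1 := Int.le_ceil ((1 - α) * ((k : ℝ) + 1))
    rw [← hmdef] at h1
    rw [h2]; exact h1
  have hhigh : (mN : ℝ) ≤ (1 - α) * ((k : ℝ) + 1) + 1 := by
    have h1 := Int.ceil_lt_add_one ((1 - α) * ((k : ℝ) + 1))
    rw [← hmdef] at h1
    rw [h2]; linarith
  constructor
  · rw [le_div_iff₀ hkpos]
    linarith
  · rw [div_le_iff₀ hkpos]
    have : (1 - α + 1 / ((k : ℝ) + 1)) * ((k : ℝ) + 1) = (1 - α) * ((k : ℝ) + 1) + 1 := by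
      field_simp
    rw [this]
    linarith
end

section
/- Suppose (e1, e2) is, conditional on X, a centered bivariate Gaussian with equal variances and non-negative covariance, and [l(t), u(t)] are intervals containing f(t) for t ∈ {-1,1}. If P(l(1) ≤ f(1) + e1 ≤ u(1)) ≥ 1-α and P(l(-1) ≤ f(-1) + e2 ≤ u(-1)) ≥ 1-α, then P( (l(1)-f(1))/√2 - (u(-1)-f(-1))/√2 ≤ e1 - e2 ≤ (u(1)-f(1))/√2 - (l(-1)-f(-1))/√2 ) ≥ 1-α, where all quantities l, u, f are deterministic (conditional on X). -/
open MeasureTheory ProbabilityTheory Set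

namespace Stmt12Aux

noncomputable def g (v : NNReal) : ℝ → ℝ := ProbabilityTheory.gaussianPDFReal 0 v

lemma g_even (v : NNReal) (x : ℝ) : g v (-x) = g v x := by
  simp [g, gaussianPDFReal, neg_sq]

lemma g_anti (v : NNReal) {x y : ℝ} (hx : 0 ≤ x) (hxy : x ≤ y) : g v y ≤ g v x := by
  unfold g gaussianPDFReal
  have h1 : (0:ℝ) ≤ (Real.sqrt (2 * Real.pi * v))⁻¹ := by positivity
  refine mul_le_mul_of_nonneg_left (Real.exp_le_exp.mpr ?_) h1
  rcases eq_or_ne (v:ℝ) 0 with hv | hv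
  · simp [hv]
  · have hv' : (0:ℝ) < v := lt_of_le_of_ne v.coe_nonneg (Ne.symm hv)
    have h2 : (x - 0)^2 ≤ (y - 0)^2 := by nlinarith
    have h3 : (0:ℝ) < 2 * v := by linarith
    rw [neg_div, neg_div, neg_le_neg_iff]
    exact div_le_div_of_nonneg_right h2 h3.le

lemma g_intble (v : NNReal) (a b : ℝ) : IntervalIntegrable (g v) volume a b :=
  (integrable_gaussianPDFReal 0 v).intervalIntegrable

lemma half (v : NNReal) {s t : ℝ} (hs : 0 ≤ s) (hst : s ≤ t) :
    (∫ x in (0:ℝ)..s, g v x) + ∫ x in (0:ℝ)..t, g v x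
      ≤ 2 * ∫ x in (0:ℝ)..((s+t)/2), g v x := by
  set m := (s+t)/2 with hm
  have hsm : s ≤ m := by rw [hm]; linarith
  have hmt : m ≤ t := by rw [hm]; linarith
  have key : (∫ x in m..t, g v x) ≤ ∫ x in s..m, g v x := by
    have h1 : (∫ x in s..m, g v (x + (m - s))) = ∫ x in m..t, g v x := by
      rw [intervalIntegral.integral_comp_add_right]
      congr 1 <;> (rw [hm]; ring)
    rw [← h1]
    refine intervalIntegral.integral_mono_on hsm
      ?_ (g_intble v s m) (fun x hx => g_anti v (hs.trans hx.1) (by linarith [hsm]))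
    exact ((integrable_gaussianPDFReal 0 v).comp_add_right (m - s)).intervalIntegrable
  have eq1 : (∫ x in (0:ℝ)..s, g v x) + ∫ x in s..m, g v x = ∫ x in (0:ℝ)..m, g v x :=
    intervalIntegral.integral_add_adjacent_intervals (g_intble v 0 s) (g_intble v s m)
  have eq2 : (∫ x in (0:ℝ)..m, g v x) + ∫ x in m..t, g v x = ∫ x in (0:ℝ)..t, g v x :=
    intervalIntegral.integral_add_adjacent_intervals (g_intble v 0 m) (g_intble v m t)
  linarith

lemma half' (v : NNReal) {s t : ℝ} (hs : 0 ≤ s) (ht : 0 ≤ t) :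
    (∫ x in (0:ℝ)..s, g v x) + ∫ x in (0:ℝ)..t, g v x
      ≤ 2 * ∫ x in (0:ℝ)..((s+t)/2), g v x := by
  rcases le_total s t with h | h
  · exact half v hs h
  · have := half v ht h
    rw [add_comm t s] at this
    linarith

lemma flip (v : NNReal) (a : ℝ) :
    (∫ x in a..(0:ℝ), g v x) = ∫ x in (0:ℝ)..(-a), g v x := by
  have : (∫ x in (0:ℝ)..(-a), g v (-x)) = ∫ x in a..(0:ℝ), g v x := by
    rw [intervalIntegral.integral_comp_neg]
    norm_num
  rw [← this]
  simp only [g_even]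

lemma meas_Icc (v : NNReal) (hv : v ≠ 0) {a b : ℝ} (hab : a ≤ b) :
    (gaussianReal 0 v (Icc a b)).toReal = ∫ x in a..b, g v x := by
  rw [gaussianReal_apply_eq_integral 0 hv, ENNReal.toReal_ofReal
      (setIntegral_nonneg measurableSet_Icc (fun x _ => gaussianPDFReal_nonneg _ _ _)),
    integral_Icc_eq_integral_Ioc, ← intervalIntegral.integral_of_le hab]
  rfl

lemma avg (v : NNReal) {a₁ b₁ a₂ b₂ : ℝ} (ha₁ : a₁ ≤ 0) (hb₁ : 0 ≤ b₁)
    (ha₂ : a₂ ≤ 0) (hb₂ : 0 ≤ b₂) :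
    (gaussianReal 0 v (Icc a₁ b₁)).toReal + (gaussianReal 0 v (Icc a₂ b₂)).toReal
      ≤ 2 * (gaussianReal 0 v (Icc ((a₁+a₂)/2) ((b₁+b₂)/2))).toReal := by
  rcases eq_or_ne v 0 with hv | hv
  · subst hv
    simp only [gaussianReal_zero_var]
    have h0 : ∀ a b : ℝ, a ≤ 0 → 0 ≤ b → ((Measure.dirac (0:ℝ)) (Icc a b)).toReal = 1 := by
      intro a b ha hb
      rw [Measure.dirac_apply_of_mem (mem_Icc.mpr ⟨ha, hb⟩)]
      simp
    rw [h0 _ _ ha₁ hb₁, h0 _ _ ha₂ hb₂, h0 _ _ (by linarith) (by linarith)]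
    norm_num
  · have split : ∀ a b : ℝ, a ≤ 0 → 0 ≤ b →
        (∫ x in a..b, g v x) = (∫ x in (0:ℝ)..(-a), g v x) + ∫ x in (0:ℝ)..b, g v x := by
      intro a b ha hb
      rw [← intervalIntegral.integral_add_adjacent_intervals (g_intble v a 0) (g_intble v 0 b),
        flip]
    rw [meas_Icc v hv (ha₁.trans hb₁), meas_Icc v hv (ha₂.trans hb₂),
      meas_Icc v hv (by linarith : (a₁+a₂)/2 ≤ (b₁+b₂)/2),
      split a₁ b₁ ha₁ hb₁, split a₂ b₂ ha₂ hb₂,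
      split ((a₁+a₂)/2) ((b₁+b₂)/2) (by linarith) (by linarith)]
    have hneg : -((a₁+a₂)/2) = ((-a₁) + (-a₂))/2 := by ring
    rw [hneg]
    have H1 := half' v (neg_nonneg.mpr ha₁) (neg_nonneg.mpr ha₂)
    have H2 := half' v hb₁ hb₂
    linarith

lemma mono_var {v w : NNReal} (hvw : v ≤ w) {a b : ℝ} (ha : a ≤ 0) (hb : 0 ≤ b) :
    gaussianReal 0 w (Icc a b) ≤ gaussianReal 0 v (Icc a b) := by
  rcases eq_or_ne w 0 with hw | hw
  · subst hw
    have : v = 0 := le_antisymm hvw zero_le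
    subst this
    exact le_rfl
  · have hw' : (0:ℝ) < w := lt_of_le_of_ne w.coe_nonneg (by exact_mod_cast (Ne.symm hw))
    set t : ℝ := Real.sqrt ((v:ℝ) / (w:ℝ)) with htdef
    have ht0 : 0 ≤ t := Real.sqrt_nonneg _
    have ht1 : t ≤ 1 := by
      rw [show (1:ℝ) = Real.sqrt 1 by simp [Real.sqrt_one], htdef]
      apply Real.sqrt_le_sqrt
      rw [div_le_one hw']
      exact_mod_cast hvw
    have hmap : (gaussianReal 0 w).map (t * ·) = gaussianReal 0 v := by
      rw [gaussianReal_map_const_mul, mul_zero]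
      congr 1
      ext
      show t^2 * (w:ℝ) = v
      rw [htdef, Real.sq_sqrt (by positivity), div_mul_cancel₀ _ (ne_of_gt hw')]
    have heq : gaussianReal 0 v (Icc a b) = gaussianReal 0 w ((t * ·) ⁻¹' Icc a b) := by
      rw [← hmap, Measure.map_apply (measurable_const_mul t) measurableSet_Icc]
    rw [heq]
    apply measure_mono
    intro x hx
    simp only [mem_preimage, mem_Icc] at *
    obtain ⟨hx1, hx2⟩ := hx
    constructor
    · nlinarith [mul_nonneg ht0 (sub_nonneg.mpr hx1), mul_nonneg (neg_nonneg.mpr ha) (sub_nonneg.mpr ht1)]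
    · nlinarith [mul_nonneg ht0 (sub_nonneg.mpr hx2), mul_nonneg hb (sub_nonneg.mpr ht1)]

end Stmt12Aux

open Stmt12Aux in
/-- If `(e₁, e₂)` is centered bivariate Gaussian with equal variances and non-negative
covariance, the deterministic intervals `[l₁,u₁]`, `[l₂,u₂]` contain `f₁`, `f₂` and cover
`f₁ + e₁`, `f₂ + e₂` with probability at least `1-α` each, then the `√2`-shrunk interval
covers `e₁ - e₂` with probability at least `1-α`. -/
theorem stmt12 {Ω : Type*} [MeasureSpace Ω] [IsProbabilityMeasure (ℙ : Measure Ω)]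
    (e₁ e₂ : Ω → ℝ) (he₁ : Measurable e₁) (he₂ : Measurable e₂)
    (σ2 c : ℝ) (hσ2 : 0 ≤ σ2) (hc : 0 ≤ c)
    (hgauss : ∀ a b : ℝ,
      Measure.map (fun ω => a * e₁ ω + b * e₂ ω) ℙ
        = gaussianReal 0 (((a ^ 2 + b ^ 2) * σ2 + 2 * a * b * c).toNNReal))
    (l₁ u₁ f₁ l₂ u₂ f₂ : ℝ)
    (h₁ : l₁ ≤ f₁ ∧ f₁ ≤ u₁) (h₂ : l₂ ≤ f₂ ∧ f₂ ≤ u₂)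
    (α : ℝ) (hα : α ∈ Set.Ioo (0 : ℝ) 1)
    (hcov₁ : (ℙ {ω | l₁ ≤ f₁ + e₁ ω ∧ f₁ + e₁ ω ≤ u₁}).toReal ≥ 1 - α)
    (hcov₂ : (ℙ {ω | l₂ ≤ f₂ + e₂ ω ∧ f₂ + e₂ ω ≤ u₂}).toReal ≥ 1 - α) :
    (ℙ {ω | (l₁ - f₁) / Real.sqrt 2 - (u₂ - f₂) / Real.sqrt 2 ≤ e₁ ω - e₂ ω
        ∧ e₁ ω - e₂ ω ≤ (u₁ - f₁) / Real.sqrt 2 - (l₂ - f₂) / Real.sqrt 2}).toReal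
      ≥ 1 - α := by
  obtain ⟨h₁l, h₁u⟩ := h₁
  obtain ⟨h₂l, h₂u⟩ := h₂
  set a₁ := l₁ - f₁ with ha₁def
  set b₁ := u₁ - f₁ with hb₁def
  set a₂ := l₂ - f₂ with ha₂def
  set b₂ := u₂ - f₂ with hb₂def
  have ha₁ : a₁ ≤ 0 := by rw [ha₁def]; linarith
  have hb₁ : 0 ≤ b₁ := by rw [hb₁def]; linarith
  have ha₂ : a₂ ≤ 0 := by rw [ha₂def]; linarith
  have hb₂ : 0 ≤ b₂ := by rw [hb₂def]; linarith
  have hs2 : (0:ℝ) < Real.sqrt 2 := by positivity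
  have hsq : Real.sqrt 2 * Real.sqrt 2 = 2 := Real.mul_self_sqrt (by norm_num)
  -- the three laws
  have law1 : Measure.map e₁ ℙ = gaussianReal 0 σ2.toNNReal := by
    have h := hgauss 1 0
    have hfun : (fun ω => (1:ℝ) * e₁ ω + 0 * e₂ ω) = e₁ := by funext ω; ring
    have hvar : ((1:ℝ)^2 + 0^2) * σ2 + 2 * 1 * 0 * c = σ2 := by ring
    rw [hfun, hvar] at h
    exact h
  have law2 : Measure.map (fun ω => -e₂ ω) ℙ = gaussianReal 0 σ2.toNNReal := by
    have h := hgauss 0 (-1)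
    have hfun : (fun ω => (0:ℝ) * e₁ ω + (-1) * e₂ ω) = fun ω => -e₂ ω := by funext ω; ring
    have hvar : ((0:ℝ)^2 + (-1)^2) * σ2 + 2 * 0 * (-1) * c = σ2 := by ring
    rw [hfun, hvar] at h
    exact h
  have lawd : Measure.map (fun ω => e₁ ω - e₂ ω) ℙ
      = gaussianReal 0 (2 * σ2 - 2 * c).toNNReal := by
    have h := hgauss 1 (-1)
    have hfun : (fun ω => (1:ℝ) * e₁ ω + (-1) * e₂ ω) = fun ω => e₁ ω - e₂ ω := by
      funext ω; ring
    have hvar : ((1:ℝ)^2 + (-1)^2) * σ2 + 2 * 1 * (-1) * c = 2 * σ2 - 2 * c := by ring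
    rw [hfun, hvar] at h
    exact h
  -- rewrite the hypotheses as gaussian probabilities
  have hcov₁' : (gaussianReal 0 σ2.toNNReal (Set.Icc a₁ b₁)).toReal ≥ 1 - α := by
    have hset : {ω | l₁ ≤ f₁ + e₁ ω ∧ f₁ + e₁ ω ≤ u₁} = e₁ ⁻¹' (Set.Icc a₁ b₁) := by
      ext ω
      simp only [Set.mem_setOf_eq, Set.mem_preimage, Set.mem_Icc, ha₁def, hb₁def]
      constructor <;> (intro h; exact ⟨by linarith [h.1], by linarith [h.2]⟩)
    rwa [hset, ← Measure.map_apply he₁ measurableSet_Icc, law1] at hcov₁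
  have hcov₂' : (gaussianReal 0 σ2.toNNReal (Set.Icc (-b₂) (-a₂))).toReal ≥ 1 - α := by
    have hset : {ω | l₂ ≤ f₂ + e₂ ω ∧ f₂ + e₂ ω ≤ u₂}
        = (fun ω => -e₂ ω) ⁻¹' (Set.Icc (-b₂) (-a₂)) := by
      ext ω
      simp only [Set.mem_setOf_eq, Set.mem_preimage, Set.mem_Icc, ha₂def, hb₂def]
      constructor <;> (intro h; exact ⟨by linarith [h.1, h.2], by linarith [h.1, h.2]⟩)
    rwa [hset, ← Measure.map_apply (f := fun ω => -e₂ ω) he₂.neg measurableSet_Icc, law2] at hcov₂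
  -- the target probability
  set A := a₁ / Real.sqrt 2 - b₂ / Real.sqrt 2 with hAdef
  set B := b₁ / Real.sqrt 2 - a₂ / Real.sqrt 2 with hBdef
  have hA0 : A ≤ 0 := by
    have h1 : a₁ / Real.sqrt 2 ≤ 0 := div_nonpos_of_nonpos_of_nonneg ha₁ hs2.le
    have h2 : 0 ≤ b₂ / Real.sqrt 2 := div_nonneg hb₂ hs2.le
    rw [hAdef]; linarith
  have hB0 : 0 ≤ B := by
    have h1 : a₂ / Real.sqrt 2 ≤ 0 := div_nonpos_of_nonpos_of_nonneg ha₂ hs2.le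
    have h2 : 0 ≤ b₁ / Real.sqrt 2 := div_nonneg hb₁ hs2.le
    rw [hBdef]; linarith
  have htarget : (ℙ {ω | (l₁ - f₁) / Real.sqrt 2 - (u₂ - f₂) / Real.sqrt 2 ≤ e₁ ω - e₂ ω
        ∧ e₁ ω - e₂ ω ≤ (u₁ - f₁) / Real.sqrt 2 - (l₂ - f₂) / Real.sqrt 2})
      = gaussianReal 0 (2 * σ2 - 2 * c).toNNReal (Set.Icc A B) := by
    rw [← lawd, Measure.map_apply (f := fun ω => e₁ ω - e₂ ω) (he₁.sub he₂) measurableSet_Icc]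
    rfl
  rw [htarget]
  -- monotonicity in the variance
  have hmono : (gaussianReal 0 (2 * σ2).toNNReal (Set.Icc A B)).toReal
      ≤ (gaussianReal 0 (2 * σ2 - 2 * c).toNNReal (Set.Icc A B)).toReal := by
    refine ENNReal.toReal_mono (measure_ne_top _ _) ?_
    exact mono_var (Real.toNNReal_le_toNNReal (by linarith)) hA0 hB0
  -- scaling by √2
  have hmap2 : (gaussianReal 0 σ2.toNNReal).map (Real.sqrt 2 * ·)
      = gaussianReal 0 ((2 * σ2).toNNReal) := by
    rw [gaussianReal_map_const_mul, mul_zero]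
    congr 1
    ext
    show (Real.sqrt 2)^2 * ((σ2.toNNReal : ℝ)) = ((2 * σ2).toNNReal : ℝ)
    rw [Real.sq_sqrt (by norm_num : (0:ℝ) ≤ 2), Real.coe_toNNReal _ hσ2,
      Real.coe_toNNReal _ (by linarith)]
  have hscale : gaussianReal 0 ((2 * σ2).toNNReal) (Set.Icc A B)
      = gaussianReal 0 σ2.toNNReal (Set.Icc (A / Real.sqrt 2) (B / Real.sqrt 2)) := by
    rw [← hmap2, Measure.map_apply (measurable_const_mul _) measurableSet_Icc,
      Set.preimage_const_mul_Icc₀ _ _ hs2]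
  have hAe : A / Real.sqrt 2 = (a₁ + -b₂) / 2 := by
    rw [hAdef, sub_div, div_div, div_div, hsq]; ring
  have hBe : B / Real.sqrt 2 = (b₁ + -a₂) / 2 := by
    rw [hBdef, sub_div, div_div, div_div, hsq]; ring
  -- averaging
  have havg := avg σ2.toNNReal ha₁ hb₁ (neg_nonpos.mpr hb₂) (neg_nonneg.mpr ha₂)
  rw [ge_iff_le]
  calc 1 - α ≤ ((gaussianReal 0 σ2.toNNReal (Set.Icc a₁ b₁)).toReal
        + (gaussianReal 0 σ2.toNNReal (Set.Icc (-b₂) (-a₂))).toReal) / 2 := by linarith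
    _ ≤ (gaussianReal 0 σ2.toNNReal
        (Set.Icc ((a₁ + -b₂)/2) ((b₁ + -a₂)/2))).toReal := by linarith
    _ = (gaussianReal 0 ((2 * σ2).toNNReal) (Set.Icc A B)).toReal := by
        rw [hscale, hAe, hBe]
    _ ≤ _ := hmono
end
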